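/- Let X, Y ⊆ ℕ and for n, s, t ≥ 0 let P_{n,s,t}^{X,Y} be the number of permutations σ of {1,…,n} with des_{X,Y}(σ) = s if t = |Y_n^c|, and 0 otherwise (with P_{0,0,0}^{X,Y} = 1). Then for all n ≥ 0: (a) if n+1 ∉ X and n+1 ∉ Y, then P_{n+1,s,t}^{X,Y} = (s+1)·P_{n,s+1,t-1}^{X,Y} + (n+1-s)·P_{n,s,t-1}^{X,Y}; (b) if n+1 ∉ X and n+1 ∈ Y, then P_{n+1,s,t}^{X,Y} = (s+1)·P_{n,s+1,t}^{X,Y} + (n+1-s)·P_{n,s,t}^{X,Y}; (c) if n+1 ∈ X and n+1 ∉ Y, then P_{n+1,s,t}^{X,Y} = (s+t)·P_{n,s,t-1}^{X,Y} + (n+2-s-t)·P_{n,s-1,t-1}^{X,Y}; (d) if n+1 ∈ X and n+1 ∈ Y, then P_{n+1,s,t}^{X,Y} = (s+t+1)·P_{n,s,t}^{X,Y} + (n+1-s-t)·P_{n,s-1,t}^{X,Y}. -/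

import Mathlib

open scoped Classical
open Finset

/-- Number of `X,Y`-descents of the word `w = w_1 ⋯ w_n` (indices `i` with
`w_i > w_{i+1}`, `w_i ∈ X`, `w_{i+1} ∈ Y`). -/
noncomputable def desXY (X Y : Set ℕ) {n : ℕ} (w : Fin n → ℕ) : ℕ :=
  (Finset.univ.filter (fun i : Fin n =>
    ∃ h : i.1 + 1 < n, w i > w ⟨i.1 + 1, h⟩ ∧ w i ∈ X ∧ w ⟨i.1 + 1, h⟩ ∈ Y)).card

/-- `permCount X Y n s` is the number of permutations `σ` of `{1,…,n}` with
exactly `s` `X,Y`-descents. -/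
noncomputable def permCount (X Y : Set ℕ) (n s : ℕ) : ℕ :=
  (Finset.univ.filter (fun σ : Equiv.Perm (Fin n) =>
    desXY X Y (fun i => (σ i : ℕ) + 1) = s)).card

/-- `α_{S,n,j} = |{x : j < x ≤ n, x ∉ S}|`. -/
noncomputable def alphaSet (S : Set ℕ) (n j : ℕ) : ℕ :=
  ((Finset.Ioc j n).filter (fun x => x ∉ S)).card

/-- `β_{S,n,j} = |{x : 1 ≤ x < j, x ∉ S}|`. -/
noncomputable def betaSet (S : Set ℕ) (j : ℕ) : ℕ :=
  ((Finset.Ico 1 j).filter (fun x => x ∉ S)).card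

/-- `permCountT X Y n s t` is the number of permutations `σ` of `{1,…,n}` with
`des_{X,Y}(σ) = s` if `t = |Y_n^c|`, and `0` otherwise; indices `s, t` range over
the integers, negative values giving `0`. -/
noncomputable def permCountT (X Y : Set ℕ) (n : ℕ) (s t : ℤ) : ℕ :=
  (Finset.univ.filter (fun σ : Equiv.Perm (Fin n) =>
    (desXY X Y (fun i => (σ i : ℕ) + 1) : ℤ) = s ∧
    t = (((Finset.Icc 1 n).filter (fun x => x ∉ Y)).card : ℤ))).card

/-! ### Auxiliary machinery -/

noncomputable def myInd (X Y : Set ℕ) (a b : ℕ) : ℕ := if b < a ∧ a ∈ X ∧ b ∈ Y then 1 else 0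

noncomputable def wE {m : ℕ} (w : Fin m → ℕ) (i : ℕ) : ℕ := if h : i < m then w ⟨i, h⟩ else 0

lemma desXY_eq_sum (X Y : Set ℕ) {m : ℕ} (w : Fin m → ℕ) :
    desXY X Y w = ∑ i ∈ Finset.range (m - 1), myInd X Y (wE w i) (wE w (i + 1)) := by
  have : ∑ i ∈ Finset.range (m - 1), myInd X Y (wE w i) (wE w (i + 1)) =
      ((Finset.range (m-1)).filter
        (fun i => wE w (i+1) < wE w i ∧ wE w i ∈ X ∧ wE w (i+1) ∈ Y)).card := by
    rw [Finset.card_filter]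
    exact Finset.sum_congr rfl (fun i _ => rfl)
  rw [this, desXY]
  apply Finset.card_bij (fun (i : Fin m) _ => (i : ℕ))
  · intro a ha
    simp only [Finset.mem_filter, Finset.mem_univ, true_and] at ha
    obtain ⟨h, h1, h2, h3⟩ := ha
    simp only [Finset.mem_filter, Finset.mem_range]
    have ha1 : (a:ℕ) < m := a.2
    have hw : wE w (a:ℕ) = w a := by rw [wE, dif_pos ha1]
    have hw2 : wE w ((a:ℕ)+1) = w ⟨(a:ℕ)+1, h⟩ := by rw [wE, dif_pos h]
    exact ⟨by omega, by rw [hw, hw2]; exact ⟨h1, h2, h3⟩⟩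
  · intro a _ b _ hab
    exact Fin.ext hab
  · intro b hb
    simp only [Finset.mem_filter, Finset.mem_range] at hb
    obtain ⟨hb1, h1, h2, h3⟩ := hb
    have hbm : b < m := by omega
    have hbm2 : b + 1 < m := by omega
    refine ⟨⟨b, hbm⟩, ?_, rfl⟩
    simp only [Finset.mem_filter, Finset.mem_univ, true_and]
    refine ⟨hbm2, ?_, ?_, ?_⟩
    · show w ⟨b+1, hbm2⟩ < w ⟨b, hbm⟩
      have hw : wE w b = w ⟨b, hbm⟩ := by rw [wE, dif_pos hbm]
      have hw2 : wE w (b+1) = w ⟨b+1, hbm2⟩ := by rw [wE, dif_pos hbm2]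
      rw [hw, hw2] at h1; exact h1
    · have hw : wE w b = w ⟨b, hbm⟩ := by rw [wE, dif_pos hbm]
      rwa [hw] at h2
    · have hw2 : wE w (b+1) = w ⟨b+1, hbm2⟩ := by rw [wE, dif_pos hbm2]
      rwa [hw2] at h3

noncomputable def insP (n : ℕ) (p : Fin (n + 1)) (σ : Equiv.Perm (Fin n)) :
    Equiv.Perm (Fin (n + 1)) :=
  (finSuccEquiv' p).trans (σ.optionCongr.trans finSuccEquivLast.symm)

lemma insP_self (n : ℕ) (p : Fin (n+1)) (σ : Equiv.Perm (Fin n)) :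
    insP n p σ p = Fin.last n := by simp [insP]

lemma insP_succAbove (n : ℕ) (p : Fin (n+1)) (σ : Equiv.Perm (Fin n)) (j : Fin n) :
    insP n p σ (p.succAbove j) = (σ j).castSucc := by simp [insP]

lemma insP_injective (n : ℕ) :
    Function.Injective (fun x : Fin (n+1) × Equiv.Perm (Fin n) => insP n x.1 x.2) := by
  rintro ⟨p, σ⟩ ⟨p', σ'⟩ h
  simp only at h
  have hp : p = p' := by
    have h1 : insP n p σ p = insP n p' σ' p := by rw [h]
    rw [insP_self] at h1
    by_contra hne
    obtain ⟨j, hj⟩ := Fin.exists_succAbove_eq hne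
    rw [← hj, insP_succAbove] at h1
    exact absurd h1.symm (Fin.castSucc_lt_last _).ne
  subst hp
  have hσ : σ = σ' := by
    ext j
    have h1 : insP n p σ (p.succAbove j) = insP n p σ' (p.succAbove j) := by rw [h]
    rw [insP_succAbove, insP_succAbove] at h1
    rw [Fin.castSucc_injective n h1]
  rw [hσ]

lemma wE_word_insP (n : ℕ) (p : Fin (n+1)) (σ : Equiv.Perm (Fin n)) (i : ℕ) :
    wE (fun k => ((insP n p σ k : ℕ) + 1)) i =
      if i = (p : ℕ) then n + 1
      else if i < (p : ℕ) then wE (fun k => ((σ k : ℕ) + 1)) i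
      else wE (fun k => ((σ k : ℕ) + 1)) (i - 1) := by
  have hp : (p : ℕ) < n + 1 := p.2
  by_cases h1 : i = (p : ℕ)
  · subst h1
    rw [if_pos rfl, wE, dif_pos hp]
    have : (⟨(p:ℕ), hp⟩ : Fin (n+1)) = p := Fin.eta p hp
    rw [this, insP_self]
    simp [Fin.last]
  · rw [if_neg h1]
    by_cases h2 : i < (p : ℕ)
    · rw [if_pos h2]
      have hin : i < n := by omega
      have hin1 : i < n + 1 := by omega
      rw [wE, dif_pos hin1, wE, dif_pos hin]
      have hs : p.succAbove ⟨i, hin⟩ = ⟨i, hin1⟩ := by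
        rw [Fin.succAbove_of_castSucc_lt]
        · rfl
        · exact h2
      rw [← hs, insP_succAbove]
      simp
    · rw [if_neg h2]
      by_cases h3 : i < n + 1
      · have hi1 : i - 1 < n := by omega
        have hpi : (p : ℕ) < i := by omega
        rw [wE, dif_pos h3, wE, dif_pos hi1]
        have hs : p.succAbove ⟨i - 1, hi1⟩ = ⟨i, h3⟩ := by
          rw [Fin.succAbove_of_le_castSucc]
          · apply Fin.ext
            simp [Fin.succ]
            omega
          · show (p : ℕ) ≤ _
            simp only [Fin.coe_castSucc]
            omega
        rw [← hs, insP_succAbove]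
        simp
      · rw [wE, dif_neg h3, wE, dif_neg (by omega : ¬ (i - 1 < n))]

lemma key_sum (X Y : Set ℕ) (n q : ℕ) (V W : ℕ → ℕ) (hq : q ≤ n)
    (hWq : W q = n + 1)
    (hWlt : ∀ i, i < q → W i = V i)
    (hWgt : ∀ i, q < i → W i = V (i - 1))
    (hV : ∀ i, V i ≤ n) :
    (∑ i ∈ Finset.range n, myInd X Y (W i) (W (i+1))) +
      (if 1 ≤ q ∧ q < n then myInd X Y (V (q-1)) (V q) else 0)
    = (∑ i ∈ Finset.range (n-1), myInd X Y (V i) (V (i+1))) +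
      (if q < n then myInd X Y (n+1) (V q) else 0) := by
  have hind0 : ∀ m, myInd X Y (V m) (n+1) = 0 := by
    intro m
    rw [myInd, if_neg]
    rintro ⟨h, -⟩
    have := hV m
    omega
  rcases Nat.lt_or_ge q n with hlt | hge
  · rw [if_pos hlt]
    rcases Nat.eq_zero_or_pos q with hq0 | hq1
    · subst hq0
      rw [if_neg (by omega)]
      obtain ⟨m, rfl⟩ : ∃ m, n = m + 1 := ⟨n - 1, by omega⟩
      rw [Finset.sum_range_succ' (fun i => myInd X Y (W i) (W (i+1))) m]
      have e1 : ∀ i ∈ Finset.range m, myInd X Y (W (i+1)) (W (i+1+1)) =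
          myInd X Y (V i) (V (i+1)) := by
        intro i _
        rw [hWgt (i+1) (by omega), hWgt (i+1+1) (by omega)]
        simp
      rw [Finset.sum_congr rfl e1, hWq, hWgt 1 (by omega)]
      simp [Nat.add_comm]
    · rw [if_pos ⟨hq1, hlt⟩]
      obtain ⟨r, rfl⟩ : ∃ r, q = r + 1 := ⟨q - 1, by omega⟩
      rw [← Finset.sum_range_add_sum_Ico (fun i => myInd X Y (W i) (W (i+1))) (le_of_lt hlt)]
      rw [Finset.sum_range_succ]
      have e1 : ∀ i ∈ Finset.range r, myInd X Y (W i) (W (i+1)) =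
          myInd X Y (V i) (V (i+1)) := by
        intro i hi
        rw [Finset.mem_range] at hi
        rw [hWlt i (by omega), hWlt (i+1) (by omega)]
      rw [Finset.sum_congr rfl e1]
      have e2 : myInd X Y (W r) (W (r+1)) = 0 := by
        rw [hWlt r (by omega), hWq]
        exact hind0 r
      rw [e2]
      rw [Finset.sum_Ico_eq_sum_range (fun i => myInd X Y (W i) (W (i+1))) (r+1) n]
      obtain ⟨k, hk⟩ : ∃ k, n - (r+1) = k + 1 := ⟨n - (r+1) - 1, by omega⟩
      rw [hk, Finset.sum_range_succ' (fun i => myInd X Y (W (r+1+i)) (W (r+1+i+1))) k]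
      have e3 : ∀ i ∈ Finset.range k, myInd X Y (W (r+1+(i+1))) (W (r+1+(i+1)+1)) =
          myInd X Y (V (r+1+i)) (V (r+1+i+1)) := by
        intro i _
        rw [hWgt (r+1+(i+1)) (by omega), hWgt (r+1+(i+1)+1) (by omega)]
        congr 2 <;> omega
      rw [Finset.sum_congr rfl e3]
      have e4 : W (r+1+0) = n + 1 := by rw [Nat.add_zero]; exact hWq
      have e5 : W (r+1+0+1) = V (r+1) := by
        rw [hWgt (r+1+0+1) (by omega)]
        congr 1
      rw [e4, e5]
      rw [← Finset.sum_range_add_sum_Ico (fun i => myInd X Y (V i) (V (i+1)))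
        (show r + 1 ≤ n - 1 by omega)]
      rw [Finset.sum_range_succ]
      rw [Finset.sum_Ico_eq_sum_range (fun i => myInd X Y (V i) (V (i+1))) (r+1) (n-1)]
      have hk2 : n - 1 - (r+1) = k := by omega
      rw [hk2]
      have : (r + 1 - 1) = r := by omega
      rw [this]
      ring
  · have hqn : q = n := by omega
    subst hqn
    rw [if_neg (by omega), if_neg (by omega)]
    rcases Nat.eq_zero_or_pos q with h0 | h1
    · subst h0; simp
    · obtain ⟨m, rfl⟩ : ∃ m, q = m + 1 := ⟨q - 1, by omega⟩
      rw [Finset.sum_range_succ]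
      have e1 : ∀ i ∈ Finset.range m, myInd X Y (W i) (W (i+1)) =
          myInd X Y (V i) (V (i+1)) := by
        intro i hi
        rw [Finset.mem_range] at hi
        rw [hWlt i (by omega), hWlt (i+1) (by omega)]
      rw [Finset.sum_congr rfl e1, hWlt m (by omega), hWq, hind0 m]
      simp

noncomputable def Vw (n : ℕ) (σ : Equiv.Perm (Fin n)) : ℕ → ℕ :=
  wE (fun k => (σ k : ℕ) + 1)

def ddP (X Y : Set ℕ) (n : ℕ) (σ : Equiv.Perm (Fin n)) (i : ℕ) : Prop :=
  Vw n σ (i+1) < Vw n σ i ∧ Vw n σ i ∈ X ∧ Vw n σ (i+1) ∈ Y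

def PEp (X Y : Set ℕ) (n : ℕ) (σ : Equiv.Perm (Fin n)) (i : ℕ) : Prop :=
  1 ≤ i ∧ i < n ∧ ddP X Y n σ (i-1)

def PFp (Y : Set ℕ) (n : ℕ) (σ : Equiv.Perm (Fin n)) (i : ℕ) : Prop :=
  i < n ∧ Vw n σ i ∈ Y

lemma Vw_le (n : ℕ) (σ : Equiv.Perm (Fin n)) (i : ℕ) : Vw n σ i ≤ n := by
  rw [Vw, wE]
  split
  · have := (σ ⟨i, by assumption⟩).2
    omega
  · omega

lemma Vw_lt (n : ℕ) (σ : Equiv.Perm (Fin n)) (i : ℕ) (h : i < n) :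
    Vw n σ i = (σ ⟨i, h⟩ : ℕ) + 1 := by
  rw [Vw, wE, dif_pos h]

lemma des_insP (X Y : Set ℕ) (n : ℕ) (σ : Equiv.Perm (Fin n)) (p : Fin (n+1)) :
    desXY X Y (fun k => ((insP n p σ k : ℕ) + 1)) +
      (if PEp X Y n σ (p:ℕ) then 1 else 0)
    = desXY X Y (fun k => ((σ k : ℕ) + 1)) +
      (if (p:ℕ) < n then myInd X Y (n+1) (Vw n σ (p:ℕ)) else 0) := by
  set q := (p : ℕ) with hqdef
  have hq : q ≤ n := by have := p.2; omega
  have hE : (if 1 ≤ q ∧ q < n then myInd X Y (Vw n σ (q-1)) (Vw n σ q) else 0) =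
      (if PEp X Y n σ q then 1 else 0) := by
    by_cases h : 1 ≤ q ∧ q < n
    · rw [if_pos h]
      have hq1 : q - 1 + 1 = q := by omega
      have hiff : ddP X Y n σ (q-1) ↔
          (Vw n σ q < Vw n σ (q-1) ∧ Vw n σ (q-1) ∈ X ∧ Vw n σ q ∈ Y) := by
        rw [ddP, hq1]
      have hPE : PEp X Y n σ q ↔ ddP X Y n σ (q-1) := by
        rw [PEp]
        exact ⟨fun ⟨_, _, hd⟩ => hd, fun hd => ⟨h.1, h.2, hd⟩⟩
      rw [myInd]
      by_cases hd : ddP X Y n σ (q-1)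
      · rw [if_pos (hiff.mp hd), if_pos (hPE.mpr hd)]
      · rw [if_neg (fun hc => hd (hiff.mpr hc)), if_neg (fun hc => hd (hPE.mp hc))]
    · rw [if_neg h, if_neg (fun hc => h ⟨hc.1, hc.2.1⟩)]
  rw [← hE]
  rw [desXY_eq_sum X Y (fun k => ((insP n p σ k : ℕ) + 1)),
      desXY_eq_sum X Y (fun k => ((σ k : ℕ) + 1))]
  have hsimp : (n + 1 - 1) = n := by omega
  rw [hsimp]
  apply key_sum X Y n q (Vw n σ) (wE (fun k => ((insP n p σ k : ℕ) + 1))) hq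
  · rw [wE_word_insP, if_pos rfl]
  · intro i hi
    rw [wE_word_insP, if_neg (by omega), if_pos hi]
    rfl
  · intro i hi
    rw [wE_word_insP, if_neg (by omega), if_neg (by omega)]
    rfl
  · exact Vw_le n σ

lemma des_eq_card_dd (X Y : Set ℕ) (n : ℕ) (σ : Equiv.Perm (Fin n)) :
    desXY X Y (fun k => ((σ k : ℕ) + 1)) =
      ((Finset.range (n-1)).filter (ddP X Y n σ)).card := by
  rw [desXY_eq_sum, Finset.card_filter]
  exact Finset.sum_congr rfl (fun i _ => by rw [myInd]; congr 1)

lemma cardPE (X Y : Set ℕ) (n : ℕ) (σ : Equiv.Perm (Fin n)) :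
    (Finset.univ.filter (fun p : Fin (n+1) => PEp X Y n σ (p:ℕ))).card =
      desXY X Y (fun k => ((σ k : ℕ) + 1)) := by
  rw [des_eq_card_dd]
  apply Finset.card_bij (fun (p : Fin (n+1)) _ => (p : ℕ) - 1)
  · intro a ha
    simp only [Finset.mem_filter, Finset.mem_univ, true_and] at ha
    obtain ⟨h1, h2, hd⟩ := ha
    simp only [Finset.mem_filter, Finset.mem_range]
    exact ⟨by omega, hd⟩
  · intro a ha b hb hab
    simp only [Finset.mem_filter, Finset.mem_univ, true_and] at ha hb
    obtain ⟨ha1, -, -⟩ := ha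
    obtain ⟨hb1, -, -⟩ := hb
    exact Fin.ext (by omega)
  · intro i hi
    simp only [Finset.mem_filter, Finset.mem_range] at hi
    obtain ⟨h1, hd⟩ := hi
    refine ⟨⟨i + 1, by omega⟩, ?_, by simp⟩
    simp only [Finset.mem_filter, Finset.mem_univ, true_and]
    refine ⟨by omega, by omega, ?_⟩
    simpa using hd

lemma cardPF (Y : Set ℕ) (n : ℕ) (σ : Equiv.Perm (Fin n)) :
    (Finset.univ.filter (fun p : Fin (n+1) => PFp Y n σ (p:ℕ))).card =
      ((Finset.Icc 1 n).filter (fun v => v ∈ Y)).card := by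
  apply Finset.card_bij (fun (p : Fin (n+1)) _ => Vw n σ (p : ℕ))
  · intro a ha
    simp only [Finset.mem_filter, Finset.mem_univ, true_and] at ha
    obtain ⟨h1, h2⟩ := ha
    simp only [Finset.mem_filter, Finset.mem_Icc]
    have := Vw_lt n σ (a : ℕ) h1
    have hb := (σ ⟨(a:ℕ), h1⟩).2
    exact ⟨⟨by omega, by omega⟩, h2⟩
  · intro a ha b hb hab
    simp only [Finset.mem_filter, Finset.mem_univ, true_and] at ha hb
    rw [Vw_lt n σ _ ha.1, Vw_lt n σ _ hb.1] at hab
    have h0 : σ ⟨(a:ℕ), ha.1⟩ = σ ⟨(b:ℕ), hb.1⟩ := Fin.ext (by omega)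
    have h1 := σ.injective h0
    have h2 := congrArg Fin.val h1
    simp only at h2
    exact Fin.ext h2
  · intro v hv
    simp only [Finset.mem_filter, Finset.mem_Icc] at hv
    obtain ⟨⟨hv1, hv2⟩, hvY⟩ := hv
    set j := σ.symm ⟨v - 1, by omega⟩ with hj
    have hjn : (j : ℕ) < n := j.2
    refine ⟨⟨(j : ℕ), by omega⟩, ?_, ?_⟩
    · simp only [Finset.mem_filter, Finset.mem_univ, true_and]
      refine ⟨hjn, ?_⟩
      rw [Vw_lt n σ _ hjn]
      have : (⟨(j:ℕ), hjn⟩ : Fin n) = j := Fin.eta j hjn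
      rw [this, hj, Equiv.apply_symm_apply]
      simpa [show v - 1 + 1 = v by omega] using hvY
    · rw [Vw_lt n σ _ hjn]
      have : (⟨(j:ℕ), hjn⟩ : Fin n) = j := Fin.eta j hjn
      rw [this, hj, Equiv.apply_symm_apply]
      simp; omega

lemma card_Ycompl (Y : Set ℕ) (n : ℕ) :
    ((Finset.Icc 1 n).filter (fun v => v ∈ Y)).card +
      ((Finset.Icc 1 n).filter (fun v => v ∉ Y)).card = n := by
  have h := Finset.card_filter_add_card_filter_not
    (s := Finset.Icc 1 n) (p := fun v => v ∈ Y)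
  have hc : (Finset.Icc 1 n).card = n := by
    rw [Nat.card_Icc]; omega
  rw [hc] at h
  convert h using 3

lemma PEp_implies_PFp (X Y : Set ℕ) (n : ℕ) (σ : Equiv.Perm (Fin n)) (i : ℕ) :
    PEp X Y n σ i → PFp Y n σ i := by
  rintro ⟨h1, h2, hd⟩
  refine ⟨h2, ?_⟩
  have := hd.2.2
  rwa [show i - 1 + 1 = i by omega] at this

lemma card_filter_add_card_filter_not {α : Type*} [Fintype α] (P : α → Prop) :
    (Finset.univ.filter (fun a => P a)).card +
      (Finset.univ.filter (fun a => ¬ P a)).card = Fintype.card α := by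
  rw [Finset.card_filter, Finset.card_filter, ← Finset.sum_add_distrib, ← Finset.card_univ,
    Finset.card_eq_sum_ones]
  apply Finset.sum_congr rfl
  intro a _
  by_cases h : P a <;> simp [h]

lemma card_filter_subset_split {α : Type*} [Fintype α] (P Q : α → Prop) (h : ∀ a, Q a → P a) :
    (Finset.univ.filter (fun a => Q a)).card +
      (Finset.univ.filter (fun a => P a ∧ ¬ Q a)).card =
      (Finset.univ.filter (fun a => P a)).card := by
  rw [Finset.card_filter, Finset.card_filter, Finset.card_filter, ← Finset.sum_add_distrib]
  apply Finset.sum_congr rfl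
  intro a _
  by_cases hq : Q a
  · simp [hq, h a hq]
  · by_cases hp : P a <;> simp [hp, hq]

lemma count_p_notX (X Y : Set ℕ) (n : ℕ) (σ : Equiv.Perm (Fin n))
    (hX : (n + 1 : ℕ) ∉ X) (s : ℤ) :
    ((Finset.univ.filter (fun p : Fin (n+1) =>
      ((desXY X Y (fun k => ((insP n p σ k : ℕ) + 1)) : ℕ) : ℤ) = s)).card : ℤ) =
    (if ((desXY X Y (fun k => ((σ k : ℕ) + 1)) : ℕ) : ℤ) = s + 1 then s + 1 else 0) +
    (if ((desXY X Y (fun k => ((σ k : ℕ) + 1)) : ℕ) : ℤ) = s then (n:ℤ) + 1 - s else 0) := by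
  set s0 := desXY X Y (fun k => ((σ k : ℕ) + 1)) with hs0
  have hpt : ∀ p : Fin (n+1), desXY X Y (fun k => ((insP n p σ k : ℕ) + 1)) +
      (if PEp X Y n σ (p:ℕ) then 1 else 0) = s0 := by
    intro p
    have h := des_insP X Y n σ p
    have hF : (if (p:ℕ) < n then myInd X Y (n+1) (Vw n σ (p:ℕ)) else 0) = 0 := by
      split
      · rw [myInd, if_neg (fun hc => hX hc.2.1)]
      · rfl
    rw [hF, add_zero] at h
    exact h
  have hcardPE := cardPE X Y n σ
  rw [← hs0] at hcardPE
  have hle : s0 ≤ n + 1 := by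
    rw [← hcardPE]
    exact le_trans (Finset.card_filter_le _ _) (by simp)
  by_cases h1 : (s0:ℤ) = s + 1
  · rw [if_pos h1, if_neg (by omega), add_zero]
    have hfe : (Finset.univ.filter (fun p : Fin (n+1) =>
        ((desXY X Y (fun k => ((insP n p σ k : ℕ) + 1)) : ℕ) : ℤ) = s)) =
        Finset.univ.filter (fun p : Fin (n+1) => PEp X Y n σ (p:ℕ)) := by
      apply Finset.filter_congr
      intro p _
      have h := hpt p
      by_cases hPE : PEp X Y n σ (p:ℕ)
      · rw [if_pos hPE] at h
        simp only [hPE, iff_true]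
        omega
      · rw [if_neg hPE] at h
        simp only [hPE, iff_false]
        omega
    rw [hfe, hcardPE]
    omega
  · by_cases h2 : (s0:ℤ) = s
    · rw [if_neg h1, if_pos h2, zero_add]
      have hfe : (Finset.univ.filter (fun p : Fin (n+1) =>
          ((desXY X Y (fun k => ((insP n p σ k : ℕ) + 1)) : ℕ) : ℤ) = s)) =
          Finset.univ.filter (fun p : Fin (n+1) => ¬ PEp X Y n σ (p:ℕ)) := by
        apply Finset.filter_congr
        intro p _
        have h := hpt p
        by_cases hPE : PEp X Y n σ (p:ℕ)
        · rw [if_pos hPE] at h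
          simp only [hPE, not_true, iff_false]
          omega
        · rw [if_neg hPE] at h
          simp only [hPE, not_false_iff, iff_true]
          omega
      rw [hfe, Finset.filter_not, Finset.card_sdiff_of_subset (Finset.filter_subset _ _),
        Finset.card_univ, Fintype.card_fin, hcardPE]
      omega
    · rw [if_neg h1, if_neg h2]
      have hfe : (Finset.univ.filter (fun p : Fin (n+1) =>
          ((desXY X Y (fun k => ((insP n p σ k : ℕ) + 1)) : ℕ) : ℤ) = s)) = ∅ := by
        rw [Finset.filter_eq_empty_iff]
        intro p _
        have h := hpt p
        by_cases hPE : PEp X Y n σ (p:ℕ)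
        · rw [if_pos hPE] at h
          intro hc
          omega
        · rw [if_neg hPE] at h
          intro hc
          omega
      rw [hfe]
      simp

lemma count_p_X (X Y : Set ℕ) (n : ℕ) (σ : Equiv.Perm (Fin n))
    (hX : (n + 1 : ℕ) ∈ X) (s : ℤ) :
    ((Finset.univ.filter (fun p : Fin (n+1) =>
      ((desXY X Y (fun k => ((insP n p σ k : ℕ) + 1)) : ℕ) : ℤ) = s)).card : ℤ) =
    (if ((desXY X Y (fun k => ((σ k : ℕ) + 1)) : ℕ) : ℤ) = s then
        1 + (((Finset.Icc 1 n).filter (fun v => v ∉ Y)).card : ℤ) + s else 0) +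
    (if ((desXY X Y (fun k => ((σ k : ℕ) + 1)) : ℕ) : ℤ) = s - 1 then
        (n:ℤ) - (((Finset.Icc 1 n).filter (fun v => v ∉ Y)).card : ℤ) - (s - 1) else 0) := by
  set s0 := desXY X Y (fun k => ((σ k : ℕ) + 1)) with hs0
  set t' := ((Finset.Icc 1 n).filter (fun v => v ∉ Y)).card with ht'
  -- pointwise descent formula
  have hdes : ∀ p : Fin (n+1), desXY X Y (fun k => ((insP n p σ k : ℕ) + 1)) =
      if (PFp Y n σ (p:ℕ) ∧ ¬ PEp X Y n σ (p:ℕ)) then s0 + 1 else s0 := by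
    intro p
    have h := des_insP X Y n σ p
    have hF : (if (p:ℕ) < n then myInd X Y (n+1) (Vw n σ (p:ℕ)) else 0) =
        (if PFp Y n σ (p:ℕ) then 1 else 0) := by
      by_cases hq : (p:ℕ) < n
      · rw [if_pos hq, myInd]
        by_cases hy : Vw n σ (p:ℕ) ∈ Y
        · rw [if_pos ⟨by have := Vw_le n σ (p:ℕ); omega, hX, hy⟩, if_pos ⟨hq, hy⟩]
        · rw [if_neg (fun hc => hy hc.2.2), if_neg (fun hc => hy hc.2)]
      · rw [if_neg hq, if_neg (fun hc => hq hc.1)]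
    rw [hF] at h
    by_cases hPE : PEp X Y n σ (p:ℕ)
    · have hPF := PEp_implies_PFp X Y n σ (p:ℕ) hPE
      rw [if_pos hPE, if_pos hPF] at h
      rw [if_neg (fun hc => hc.2 hPE)]
      omega
    · rw [if_neg hPE] at h
      by_cases hPF : PFp Y n σ (p:ℕ)
      · rw [if_pos hPF] at h
        rw [if_pos ⟨hPF, hPE⟩]
        omega
      · rw [if_neg hPF] at h
        rw [if_neg (fun hc => hPF hc.1)]
        omega
  -- cardinality facts
  have hcardPE := cardPE X Y n σ
  rw [← hs0] at hcardPE
  have hbt : (Finset.univ.filter (fun p : Fin (n+1) => PFp Y n σ (p:ℕ))).card + t' = n := by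
    rw [cardPF]
    exact card_Ycompl Y n
  have hApart := card_filter_subset_split (fun p : Fin (n+1) => PFp Y n σ (p:ℕ))
    (fun p : Fin (n+1) => PEp X Y n σ (p:ℕ))
    (fun p => PEp_implies_PFp X Y n σ (p:ℕ))
  beta_reduce at hApart
  rw [hcardPE] at hApart
  by_cases h1 : (s0:ℤ) = s
  · rw [if_pos h1, if_neg (by omega), add_zero]
    have hfe : (Finset.univ.filter (fun p : Fin (n+1) =>
        ((desXY X Y (fun k => ((insP n p σ k : ℕ) + 1)) : ℕ) : ℤ) = s)) =
        Finset.univ.filter (fun p : Fin (n+1) =>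
          ¬ (PFp Y n σ (p:ℕ) ∧ ¬ PEp X Y n σ (p:ℕ))) := by
      apply Finset.filter_congr
      intro p _
      rw [hdes p]
      by_cases hA : PFp Y n σ (p:ℕ) ∧ ¬ PEp X Y n σ (p:ℕ)
      · rw [if_pos hA]
        exact iff_of_false (by omega) (not_not_intro hA)
      · rw [if_neg hA]
        exact iff_of_true (by omega) hA
    rw [hfe, Finset.filter_not, Finset.card_sdiff_of_subset (Finset.filter_subset _ _),
      Finset.card_univ, Fintype.card_fin]
    omega
  · by_cases h2 : (s0:ℤ) = s - 1
    · rw [if_neg h1, if_pos h2, zero_add]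
      have hfe : (Finset.univ.filter (fun p : Fin (n+1) =>
          ((desXY X Y (fun k => ((insP n p σ k : ℕ) + 1)) : ℕ) : ℤ) = s)) =
          Finset.univ.filter (fun p : Fin (n+1) =>
            PFp Y n σ (p:ℕ) ∧ ¬ PEp X Y n σ (p:ℕ)) := by
        apply Finset.filter_congr
        intro p _
        rw [hdes p]
        by_cases hA : PFp Y n σ (p:ℕ) ∧ ¬ PEp X Y n σ (p:ℕ)
        · rw [if_pos hA]
          exact iff_of_true (by omega) hA
        · rw [if_neg hA]
          exact iff_of_false (by omega) hA
      rw [hfe]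
      omega
    · rw [if_neg h1, if_neg h2]
      have hfe : (Finset.univ.filter (fun p : Fin (n+1) =>
          ((desXY X Y (fun k => ((insP n p σ k : ℕ) + 1)) : ℕ) : ℤ) = s)) = ∅ := by
        rw [Finset.filter_eq_empty_iff]
        intro p _
        rw [hdes p]
        by_cases hA : PFp Y n σ (p:ℕ) ∧ ¬ PEp X Y n σ (p:ℕ)
        · rw [if_pos hA]
          intro hc
          omega
        · rw [if_neg hA]
          intro hc
          omega
      rw [hfe]
      simp

lemma card_filter_equiv {α β : Type*} [Fintype α] [Fintype β] (e : α ≃ β) (P : β → Prop)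
    [DecidablePred P] [DecidablePred (fun a => P (e a))] :
    (Finset.univ.filter (fun b => P b)).card = (Finset.univ.filter (fun a => P (e a))).card := by
  apply Finset.card_bij (fun b _ => e.symm b)
  · intro b hb
    simp only [Finset.mem_filter, Finset.mem_univ, true_and] at hb ⊢
    rwa [Equiv.apply_symm_apply]
  · intro a _ b _ hab
    exact e.symm.injective hab
  · intro a ha
    simp only [Finset.mem_filter, Finset.mem_univ, true_and] at ha
    exact ⟨e a, by simpa using ha, by simp⟩

lemma card_filter_prod {α β : Type*} [Fintype α] [Fintype β] (P : α × β → Prop)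
    [DecidablePred P] [∀ b : β, DecidablePred (fun a : α => P (a, b))] :
    (Finset.univ.filter (fun x : α × β => P x)).card
      = ∑ b : β, (Finset.univ.filter (fun a : α => P (a, b))).card := by
  rw [Finset.card_filter, ← Finset.univ_product_univ, Finset.sum_product_right]
  exact Finset.sum_congr rfl (fun b _ => (Finset.card_filter _ _).symm)

noncomputable def insEquiv (n : ℕ) : (Fin (n+1) × Equiv.Perm (Fin n)) ≃ Equiv.Perm (Fin (n+1)) :=
  Equiv.ofBijective (fun x => insP n x.1 x.2)
    ((Fintype.bijective_iff_injective_and_card _).mpr ⟨insP_injective n, by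
      simp [Fintype.card_perm, Nat.factorial_succ]⟩)

lemma insEquiv_apply (n : ℕ) (x : Fin (n+1) × Equiv.Perm (Fin n)) :
    insEquiv n x = insP n x.1 x.2 := rfl

lemma sum_ite_card {α : Type*} [Fintype α] (P : α → Prop) [DecidablePred P] (c : ℤ) :
    ∑ a : α, (if P a then c else 0) = ((Finset.univ.filter (fun a => P a)).card : ℤ) * c := by
  rw [← Finset.sum_filter, Finset.sum_const, nsmul_eq_mul]

lemma C_rec_notX (X Y : Set ℕ) (n : ℕ) (hX : (n + 1 : ℕ) ∉ X) (s : ℤ) :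
    ((Finset.univ.filter (fun σ : Equiv.Perm (Fin (n+1)) =>
        ((desXY X Y (fun i => (σ i : ℕ) + 1) : ℕ) : ℤ) = s)).card : ℤ)
    = (s + 1) * ((Finset.univ.filter (fun σ : Equiv.Perm (Fin n) =>
        ((desXY X Y (fun i => (σ i : ℕ) + 1) : ℕ) : ℤ) = s + 1)).card : ℤ)
      + ((n : ℤ) + 1 - s) * ((Finset.univ.filter (fun σ : Equiv.Perm (Fin n) =>
        ((desXY X Y (fun i => (σ i : ℕ) + 1) : ℕ) : ℤ) = s)).card : ℤ) := by
  rw [card_filter_equiv (insEquiv n)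
    (fun τ : Equiv.Perm (Fin (n+1)) => ((desXY X Y (fun i => (τ i : ℕ) + 1) : ℕ) : ℤ) = s)]
  simp only [insEquiv_apply]
  erw [card_filter_prod (fun x : Fin (n+1) × Equiv.Perm (Fin n) =>
    ((desXY X Y (fun i => ((insP n x.1 x.2) i : ℕ) + 1) : ℕ) : ℤ) = s)]
  push_cast
  rw [Finset.sum_congr rfl (fun σ _ => count_p_notX X Y n σ hX s)]
  rw [Finset.sum_add_distrib, sum_ite_card, sum_ite_card]
  ring

lemma C_rec_X (X Y : Set ℕ) (n : ℕ) (hX : (n + 1 : ℕ) ∈ X) (s : ℤ) :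
    ((Finset.univ.filter (fun σ : Equiv.Perm (Fin (n+1)) =>
        ((desXY X Y (fun i => (σ i : ℕ) + 1) : ℕ) : ℤ) = s)).card : ℤ)
    = (1 + (((Finset.Icc 1 n).filter (fun v => v ∉ Y)).card : ℤ) + s) *
        ((Finset.univ.filter (fun σ : Equiv.Perm (Fin n) =>
        ((desXY X Y (fun i => (σ i : ℕ) + 1) : ℕ) : ℤ) = s)).card : ℤ)
      + ((n : ℤ) - (((Finset.Icc 1 n).filter (fun v => v ∉ Y)).card : ℤ) - (s - 1)) *
        ((Finset.univ.filter (fun σ : Equiv.Perm (Fin n) =>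
        ((desXY X Y (fun i => (σ i : ℕ) + 1) : ℕ) : ℤ) = s - 1)).card : ℤ) := by
  rw [card_filter_equiv (insEquiv n)
    (fun τ : Equiv.Perm (Fin (n+1)) => ((desXY X Y (fun i => (τ i : ℕ) + 1) : ℕ) : ℤ) = s)]
  simp only [insEquiv_apply]
  erw [card_filter_prod (fun x : Fin (n+1) × Equiv.Perm (Fin n) =>
    ((desXY X Y (fun i => ((insP n x.1 x.2) i : ℕ) + 1) : ℕ) : ℤ) = s)]
  push_cast
  rw [Finset.sum_congr rfl (fun σ _ => count_p_X X Y n σ hX s)]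
  rw [Finset.sum_add_distrib, sum_ite_card, sum_ite_card]
  ring

lemma permCountT_eq (X Y : Set ℕ) (m : ℕ) (s t : ℤ) :
    permCountT X Y m s t =
      if t = (((Finset.Icc 1 m).filter (fun x => x ∉ Y)).card : ℤ) then
        (Finset.univ.filter (fun σ : Equiv.Perm (Fin m) =>
          ((desXY X Y (fun i => (σ i : ℕ) + 1) : ℕ) : ℤ) = s)).card
      else 0 := by
  rw [permCountT]
  split_ifs with h
  · congr 1
    apply Finset.filter_congr
    intro σ _
    exact and_iff_left h
  · rw [Finset.filter_eq_empty_iff.mpr (fun σ _ hc => h hc.2)]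
    rfl

lemma Tsucc (Y : Set ℕ) (n : ℕ) :
    ((Finset.Icc 1 (n+1)).filter (fun x => x ∉ Y)).card =
      ((Finset.Icc 1 n).filter (fun x => x ∉ Y)).card + (if (n+1) ∉ Y then 1 else 0) := by
  have hIcc : Finset.Icc 1 (n+1) = insert (n+1) (Finset.Icc 1 n) := by
    ext x
    simp only [Finset.mem_Icc, Finset.mem_insert]
    omega
  rw [hIcc, Finset.filter_insert]
  split_ifs with h
  · rw [add_zero]
  · rw [Finset.card_insert_of_notMem]
    intro hc
    rw [Finset.mem_filter, Finset.mem_Icc] at hc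
    omega

theorem stmt4 (X Y : Set ℕ) (n s t : ℕ) :
    ((n + 1) ∉ X → (n + 1) ∉ Y →
      (permCountT X Y (n + 1) s t : ℤ) =
        ((s : ℤ) + 1) * permCountT X Y n ((s : ℤ) + 1) ((t : ℤ) - 1) +
          ((n : ℤ) + 1 - s) * permCountT X Y n s ((t : ℤ) - 1)) ∧
    ((n + 1) ∉ X → (n + 1) ∈ Y →
      (permCountT X Y (n + 1) s t : ℤ) =
        ((s : ℤ) + 1) * permCountT X Y n ((s : ℤ) + 1) t +
          ((n : ℤ) + 1 - s) * permCountT X Y n s t) ∧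
    ((n + 1) ∈ X → (n + 1) ∉ Y →
      (permCountT X Y (n + 1) s t : ℤ) =
        ((s : ℤ) + t) * permCountT X Y n s ((t : ℤ) - 1) +
          ((n : ℤ) + 2 - s - t) * permCountT X Y n ((s : ℤ) - 1) ((t : ℤ) - 1)) ∧
    ((n + 1) ∈ X → (n + 1) ∈ Y →
      (permCountT X Y (n + 1) s t : ℤ) =
        ((s : ℤ) + t + 1) * permCountT X Y n s t +
          ((n : ℤ) + 1 - s - t) * permCountT X Y n ((s : ℤ) - 1) t) := by
  have hT := Tsucc Y n
  refine ⟨?_, ?_, ?_, ?_⟩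
  · intro hX hY
    have hT1 : ((Finset.Icc 1 (n+1)).filter (fun x => x ∉ Y)).card =
        ((Finset.Icc 1 n).filter (fun x => x ∉ Y)).card + 1 := by
      rw [hT, if_pos hY]
    rw [permCountT_eq, permCountT_eq, permCountT_eq]
    by_cases ht : (t : ℤ) = (((Finset.Icc 1 (n+1)).filter (fun x => x ∉ Y)).card : ℤ)
    · rw [if_pos ht, if_pos (by omega : (t:ℤ) - 1 =
        (((Finset.Icc 1 n).filter (fun x => x ∉ Y)).card : ℤ)), if_pos (by omega : (t:ℤ) - 1 =
        (((Finset.Icc 1 n).filter (fun x => x ∉ Y)).card : ℤ))]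
      exact C_rec_notX X Y n hX (s : ℤ)
    · rw [if_neg ht, if_neg (by omega), if_neg (by omega)]
      push_cast
      ring
  · intro hX hY
    have hT1 : ((Finset.Icc 1 (n+1)).filter (fun x => x ∉ Y)).card =
        ((Finset.Icc 1 n).filter (fun x => x ∉ Y)).card := by
      rw [hT, if_neg (not_not_intro hY), add_zero]
    rw [permCountT_eq, permCountT_eq, permCountT_eq]
    by_cases ht : (t : ℤ) = (((Finset.Icc 1 (n+1)).filter (fun x => x ∉ Y)).card : ℤ)
    · rw [if_pos ht, if_pos (by omega : (t:ℤ) =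
        (((Finset.Icc 1 n).filter (fun x => x ∉ Y)).card : ℤ)), if_pos (by omega : (t:ℤ) =
        (((Finset.Icc 1 n).filter (fun x => x ∉ Y)).card : ℤ))]
      exact C_rec_notX X Y n hX (s : ℤ)
    · rw [if_neg ht, if_neg (by omega), if_neg (by omega)]
      push_cast
      ring
  · intro hX hY
    have hT1 : ((Finset.Icc 1 (n+1)).filter (fun x => x ∉ Y)).card =
        ((Finset.Icc 1 n).filter (fun x => x ∉ Y)).card + 1 := by
      rw [hT, if_pos hY]
    rw [permCountT_eq, permCountT_eq, permCountT_eq]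
    by_cases ht : (t : ℤ) = (((Finset.Icc 1 (n+1)).filter (fun x => x ∉ Y)).card : ℤ)
    · rw [if_pos ht, if_pos (by omega : (t:ℤ) - 1 =
        (((Finset.Icc 1 n).filter (fun x => x ∉ Y)).card : ℤ)), if_pos (by omega : (t:ℤ) - 1 =
        (((Finset.Icc 1 n).filter (fun x => x ∉ Y)).card : ℤ))]
      rw [C_rec_X X Y n hX (s : ℤ)]
      have htt : (t : ℤ) = (((Finset.Icc 1 n).filter (fun x => x ∉ Y)).card : ℤ) + 1 := by
        omega
      rw [htt]
      ring
    · rw [if_neg ht, if_neg (by omega), if_neg (by omega)]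
      push_cast
      ring
  · intro hX hY
    have hT1 : ((Finset.Icc 1 (n+1)).filter (fun x => x ∉ Y)).card =
        ((Finset.Icc 1 n).filter (fun x => x ∉ Y)).card := by
      rw [hT, if_neg (not_not_intro hY), add_zero]
    rw [permCountT_eq, permCountT_eq, permCountT_eq]
    by_cases ht : (t : ℤ) = (((Finset.Icc 1 (n+1)).filter (fun x => x ∉ Y)).card : ℤ)
    · rw [if_pos ht, if_pos (by omega : (t:ℤ) =
        (((Finset.Icc 1 n).filter (fun x => x ∉ Y)).card : ℤ)), if_pos (by omega : (t:ℤ) =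
        (((Finset.Icc 1 n).filter (fun x => x ∉ Y)).card : ℤ))]
      rw [C_rec_X X Y n hX (s : ℤ)]
      have htt : (t : ℤ) = (((Finset.Icc 1 n).filter (fun x => x ∉ Y)).card : ℤ) := by
        omega
      rw [htt]
      ring
    · rw [if_neg ht, if_neg (by omega), if_neg (by omega)]
      push_cast
      ring
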